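/- For agents with monotone subadditive valuations, a (1/n)-MMS allocation always exists: there is a partition A_1,...,A_n of the item set M (agent i receives A_i) such that v_i(A_i) ≥ (1/n)·MMS(M, v_i, n) for every agent i. -/

import Mathlib

open Finset

/-- `P` is a partition of the finite set `X` into `n` (possibly empty) parts. -/
def IsPartitionOn {M : Type*} [DecidableEq M] {n : ℕ} (X : Finset M) (P : Fin n → Finset M) : Prop :=
  (∀ i j, i ≠ j → Disjoint (P i) (P j)) ∧ Finset.univ.biUnion P = X

/-- `t` is residual self-feasible for valuation `v` on the item set `X` with `n` agents:
for every `0 ≤ k < n`, after removing any `k` pairwise disjoint bundles of `X`, each of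
`v`-value strictly less than `t`, the remaining items admit an `(n-k)`-partition in which
every part has `v`-value at least `t`. -/
def RSF {M : Type*} [DecidableEq M] {α : Type*} [Preorder α] (v : Finset M → α) (n : ℕ)
    (X : Finset M) (t : α) : Prop :=
  ∀ k, k < n → ∀ B : Fin k → Finset M,
    (∀ i j, i ≠ j → Disjoint (B i) (B j)) → (∀ i, B i ⊆ X) → (∀ i, v (B i) < t) →
    ∃ P : Fin (n - k) → Finset M,
      (∀ i j, i ≠ j → Disjoint (P i) (P j)) ∧
      Finset.univ.biUnion P = X \ Finset.univ.biUnion B ∧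
      ∀ i, t ≤ v (P i)

lemma v_biUnion_le {M : Type*} [DecidableEq M] {ι : Type*} [DecidableEq ι]
    (v : Finset M → NNReal) (hzero : v ∅ = 0)
    (hsub : ∀ S T : Finset M, v (S ∪ T) ≤ v S + v T)
    (F : Finset ι) (f : ι → Finset M) :
    v (F.biUnion f) ≤ ∑ j ∈ F, v (f j) := by
  classical
  induction F using Finset.induction_on with
  | empty => simp [hzero]
  | insert _ _ h ih =>
    rename_i a s
    rw [Finset.biUnion_insert, Finset.sum_insert h]
    exact le_trans (hsub _ _) (add_le_add_right ih _)

lemma rec_main {M : Type*} [Fintype M] [DecidableEq M] {n : ℕ}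
    (v : Fin n → Finset M → NNReal)
    (hmono : ∀ i, ∀ S T : Finset M, S ⊆ T → v i S ≤ v i T)
    (hzero : ∀ i, v i ∅ = 0)
    (hsub : ∀ i, ∀ S T : Finset M, v i (S ∪ T) ≤ v i S + v i T)
    (t : Fin n → NNReal)
    (P : Fin n → Fin n → Finset M)
    (hPdisj : ∀ i, ∀ j k, j ≠ k → Disjoint (P i j) (P i k))
    (hPval : ∀ i j, (n : NNReal) * t i ≤ v i (P i j))
    (U : Finset (Fin n)) (hU0 : ∀ j ∈ U, t j ≠ 0) :
    ∀ (N : ℕ) (T : Finset (Fin n)), T.card ≤ N → T ⊆ U →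
    ∀ A : Fin n → Finset M,
      (∀ j, j ∉ U → A j = ∅) →
      (∀ j ∈ T, A j = ∅) →
      (∀ j j', j ≠ j' → Disjoint (A j) (A j')) →
      (∀ j ∈ U, j ∉ T → t j ≤ v j (A j)) →
      (∀ j ∈ U, j ∉ T → ∀ i ∈ T, ∀ S ⊆ A j, S ≠ A j → v i S < t i) →
      ∃ A' : Fin n → Finset M,
        (∀ j j', j ≠ j' → Disjoint (A' j) (A' j')) ∧
        (∀ j ∈ U, t j ≤ v j (A' j)) := by
  classical
  intro N
  induction N with
  | zero =>
    intro T hcard hTU A hAU hAT hdisj hval hmin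
    have hT : T = ∅ := Finset.card_eq_zero.mp (Nat.le_zero.mp hcard)
    subst hT
    exact ⟨A, hdisj, fun j hj => hval j hj (Finset.notMem_empty j)⟩
  | succ N ih =>
    intro T hcard hTU A hAU hAT hdisj hval hmin
    rcases T.eq_empty_or_nonempty with hT | ⟨i0, hi0⟩
    · subst hT
      exact ⟨A, hdisj, fun j hj => hval j hj (Finset.notMem_empty j)⟩
    -- remaining region
    set R : Finset M := Finset.univ \ Finset.univ.biUnion A with hR
    -- agents already assigned are nonempty bundles
    have hAne : ∀ j ∈ U, j ∉ T → A j ≠ ∅ := by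
      intro j hjU hjT h
      have hv := hval j hjU hjT
      rw [h, hzero j] at hv
      exact hU0 j hjU (le_antisymm hv zero_le)
    -- key existence claim
    have hexS : ∀ i ∈ T, ∃ S, S ⊆ R ∧ t i ≤ v i S := by
      intro i hi
      set K := U \ T with hK
      have hKcard : K.card + 1 ≤ n := by
        have h1 : K.card + T.card = U.card := Finset.card_sdiff_add_card_eq_card hTU
        have h2 : U.card ≤ n := by
          simpa using Finset.card_le_univ U
        have h3 : 1 ≤ T.card := Finset.card_pos.mpr ⟨i, hi⟩
        omega
      -- dead parts
      set D : Finset (Fin n) := Finset.univ.filter (fun s => ∃ j ∈ K, A j ⊆ P i s) with hD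
      have hDcard : D.card ≤ K.card := by
        have hgex : ∀ s : Fin n, ∃ j, s ∈ D → (j ∈ K ∧ A j ⊆ P i s) := by
          intro s
          by_cases hs : s ∈ D
          · obtain ⟨j, hj1, hj2⟩ := (Finset.mem_filter.mp hs).2
            exact ⟨j, fun _ => ⟨hj1, hj2⟩⟩
          · exact ⟨i, fun h => absurd h hs⟩
        choose g hg using hgex
        have hg1 : ∀ s ∈ D, g s ∈ K := fun s hs => (hg s hs).1
        have hg2 : ∀ s ∈ D, A (g s) ⊆ P i s := fun s hs => (hg s hs).2
        apply Finset.card_le_card_of_injOn g (fun s hs => hg1 s hs)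
        intro s hs s' hs' hgs
        by_contra hne
        have hd := hPdisj i s s' hne
        have hjK := hg1 s hs
        have hjne : A (g s) ≠ ∅ := hAne _ (Finset.mem_sdiff.mp hjK).1 (Finset.mem_sdiff.mp hjK).2
        obtain ⟨x, hx⟩ := Finset.nonempty_iff_ne_empty.mpr hjne
        exact (Finset.disjoint_left.mp hd (hg2 s hs hx)) (hg2 s' hs' (hgs ▸ hx))
      have hDne : ∃ s, s ∉ D := by
        by_contra h
        push_neg at h
        have : D = Finset.univ := Finset.eq_univ_iff_forall.mpr h
        rw [this, Finset.card_univ, Fintype.card_fin] at hDcard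
        omega
      obtain ⟨s, hs⟩ := hDne
      have halive : ∀ j ∈ K, ¬ A j ⊆ P i s := by
        intro j hj hsub'
        exact hs (Finset.mem_filter.mpr ⟨Finset.mem_univ s, ⟨j, hj, hsub'⟩⟩)
      refine ⟨P i s \ Finset.univ.biUnion A, Finset.sdiff_subset_sdiff (Finset.subset_univ _) le_rfl, ?_⟩
      -- cover
      have hcover : P i s ⊆ (P i s \ Finset.univ.biUnion A) ∪ K.biUnion (fun j => P i s ∩ A j) := by
        intro x hx
        by_cases hxB : x ∈ Finset.univ.biUnion A
        · obtain ⟨j, _, hxj⟩ := Finset.mem_biUnion.mp hxB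
          have hjU : j ∈ U := by
            by_contra h
            rw [hAU j h] at hxj; exact absurd hxj (Finset.notMem_empty x)
          have hjT : j ∉ T := by
            intro h
            rw [hAT j h] at hxj; exact absurd hxj (Finset.notMem_empty x)
          exact Finset.mem_union_right _ (Finset.mem_biUnion.mpr
            ⟨j, Finset.mem_sdiff.mpr ⟨hjU, hjT⟩, Finset.mem_inter.mpr ⟨hx, hxj⟩⟩)
        · exact Finset.mem_union_left _ (Finset.mem_sdiff.mpr ⟨hx, hxB⟩)
      have hsum : v i (P i s) ≤ v i (P i s \ Finset.univ.biUnion A)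
          + ∑ j ∈ K, v i (P i s ∩ A j) := by
        calc v i (P i s) ≤ v i ((P i s \ Finset.univ.biUnion A) ∪ K.biUnion (fun j => P i s ∩ A j)) :=
              hmono i _ _ hcover
          _ ≤ v i (P i s \ Finset.univ.biUnion A) + v i (K.biUnion (fun j => P i s ∩ A j)) := hsub i _ _
          _ ≤ _ := add_le_add_right (v_biUnion_le (v i) (hzero i) (hsub i) K _) _
      have hterm : ∀ j ∈ K, v i (P i s ∩ A j) ≤ t i := by
        intro j hj
        have hjU := (Finset.mem_sdiff.mp hj).1
        have hjT := (Finset.mem_sdiff.mp hj).2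
        refine le_of_lt (hmin j hjU hjT i hi _ (Finset.inter_subset_right) ?_)
        intro h
        exact halive j hj (by rw [← h]; exact Finset.inter_subset_left)
      have hsum2 : ∑ j ∈ K, v i (P i s ∩ A j) ≤ (K.card : NNReal) * t i := by
        calc ∑ j ∈ K, v i (P i s ∩ A j) ≤ ∑ _j ∈ K, t i := Finset.sum_le_sum hterm
          _ = (K.card : NNReal) * t i := by rw [Finset.sum_const, nsmul_eq_mul]
      have hfin : (n : NNReal) * t i ≤ v i (P i s \ Finset.univ.biUnion A) + (K.card : NNReal) * t i :=
        le_trans (hPval i s) (le_trans hsum (add_le_add_right hsum2 _))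
      have hcast : ((K.card : NNReal) + 1) * t i ≤ (n : NNReal) * t i := by
        apply mul_le_mul_of_nonneg_right _ zero_le
        have : ((K.card + 1 : ℕ) : NNReal) ≤ (n : NNReal) := Nat.cast_le.mpr hKcard
        simpa using this
      have : t i + (K.card : NNReal) * t i ≤ v i (P i s \ Finset.univ.biUnion A) + (K.card : NNReal) * t i := by
        refine le_trans ?_ hfin
        calc t i + (K.card : NNReal) * t i = ((K.card : NNReal) + 1) * t i := by ring
          _ ≤ _ := hcast
      exact le_of_add_le_add_right this
    -- candidate bundles
    set cand : Finset (Finset M) := Finset.univ.filter (fun S => S ⊆ R ∧ ∃ a ∈ T, t a ≤ v a S) with hcand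
    have hcandne : cand.Nonempty := by
      obtain ⟨S, hSR, hSv⟩ := hexS i0 hi0
      exact ⟨S, Finset.mem_filter.mpr ⟨Finset.mem_univ S, hSR, i0, hi0, hSv⟩⟩
    obtain ⟨B, hBc, hBmin⟩ := Finset.exists_min_image cand Finset.card hcandne
    obtain ⟨-, hBR, a, haT, haB⟩ := Finset.mem_filter.mp hBc
    -- recurse
    have hkey := ih (T.erase a) (by
        have := Finset.card_erase_of_mem haT; omega)
      (fun j hj => hTU (Finset.mem_of_mem_erase hj))
      (Function.update A a B)
      (fun j hj => by
        rw [Function.update_of_ne (fun h => hj (by rw [h]; exact hTU haT))]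
        exact hAU j hj)
      (fun j hj => by
        rw [Function.update_of_ne (Finset.ne_of_mem_erase hj)]
        exact hAT j (Finset.mem_of_mem_erase hj))
      (fun j j' hne => by
        rcases eq_or_ne j a with rfl | hja
        · rw [Function.update_self, Function.update_of_ne hne.symm]
          exact (Finset.sdiff_disjoint.mono hBR (Finset.subset_biUnion_of_mem A (Finset.mem_univ j')))
        · rw [Function.update_of_ne hja]
          rcases eq_or_ne j' a with rfl | hja'
          · rw [Function.update_self]
            exact (Finset.sdiff_disjoint.mono hBR (Finset.subset_biUnion_of_mem A (Finset.mem_univ j))).symm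
          · rw [Function.update_of_ne hja']
            exact hdisj j j' hne)
      (fun j hjU hjT => by
        rcases eq_or_ne j a with rfl | hja
        · rw [Function.update_self]; exact haB
        · rw [Function.update_of_ne hja]
          exact hval j hjU (fun h => hjT (Finset.mem_erase.mpr ⟨hja, h⟩)))
      (fun j hjU hjT i hiT S hS hSne => by
        have hiT' := Finset.mem_of_mem_erase hiT
        rcases eq_or_ne j a with rfl | hja
        · rw [Function.update_self] at hS hSne
          by_contra h
          have hle : t i ≤ v i S := not_lt.mp h
          have hScand : S ∈ cand := Finset.mem_filter.mpr
            ⟨Finset.mem_univ S, hS.trans hBR, i, hiT', hle⟩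
          have := hBmin S hScand
          have := Finset.card_lt_card (Finset.ssubset_iff_subset_ne.mpr ⟨hS, hSne⟩)
          omega
        · rw [Function.update_of_ne hja] at hS hSne
          exact hmin j hjU (fun h => hjT (Finset.mem_erase.mpr ⟨hja, h⟩)) i hiT' S hS hSne)
    exact hkey

/-- For agents with monotone subadditive valuations, a `(1/n)`-MMS allocation always
exists. -/
theorem exists_one_over_n_mms_allocation {M : Type*} [Fintype M] [DecidableEq M]
    (n : ℕ) (hn : 1 ≤ n)
    (v : Fin n → Finset M → NNReal)
    (hmono : ∀ i, ∀ S T : Finset M, S ⊆ T → v i S ≤ v i T)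
    (hzero : ∀ i, v i ∅ = 0)
    (hsub : ∀ i, ∀ S T : Finset M, v i (S ∪ T) ≤ v i S + v i T)
    (μ : Fin n → NNReal)
    (hμ : ∀ i, IsGreatest {t : NNReal | ∃ P : Fin n → Finset M,
        IsPartitionOn Finset.univ P ∧ ∀ j, t ≤ v i (P j)} (μ i)) :
    ∃ A : Fin n → Finset M, IsPartitionOn Finset.univ A ∧
      ∀ i, μ i / n ≤ v i (A i) := by
  classical
  set t : Fin n → NNReal := fun i => μ i / n with ht
  choose P hPpart hPval using fun i => (hμ i).1
  have hnne : (n : NNReal) ≠ 0 := Nat.cast_ne_zero.mpr (by omega)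
  have hPval' : ∀ i j, (n : NNReal) * t i ≤ v i (P i j) := by
    intro i j
    have : (n : NNReal) * t i = μ i := by
      rw [ht]; field_simp
    rw [this]; exact hPval i j
  set U : Finset (Fin n) := Finset.univ.filter (fun j => t j ≠ 0) with hU
  obtain ⟨A', hdisj', hval'⟩ := rec_main v hmono hzero hsub t P (fun i => (hPpart i).1) hPval' U
    (fun j hj => (Finset.mem_filter.mp hj).2) n U
    (by simpa using Finset.card_le_univ U)
    Finset.Subset.rfl (fun _ => ∅)
    (fun j _ => rfl) (fun j _ => rfl)
    (fun j j' _ => Finset.disjoint_empty_left _)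
    (fun j hjU hjT => absurd hjU hjT)
    (fun j hjU hjT => absurd hjU hjT)
  set j0 : Fin n := ⟨0, hn⟩ with hj0
  set L : Finset M := Finset.univ \ Finset.univ.biUnion A' with hL
  set A'' : Fin n → Finset M := Function.update A' j0 (A' j0 ∪ L) with hA''
  have hsubA : ∀ j, A' j ⊆ A'' j := by
    intro j
    rcases eq_or_ne j j0 with rfl | hj
    · rw [hA'', Function.update_self]; exact Finset.subset_union_left
    · rw [hA'', Function.update_of_ne hj]
  have hLd : ∀ j, Disjoint L (A' j) :=
    fun j => Finset.sdiff_disjoint.mono le_rfl (Finset.subset_biUnion_of_mem A' (Finset.mem_univ j))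
  refine ⟨A'', ⟨?_, ?_⟩, ?_⟩
  · intro j j' hne
    rcases eq_or_ne j j0 with rfl | hj
    · rw [hA'', Function.update_self, Function.update_of_ne hne.symm]
      exact Finset.disjoint_union_left.mpr ⟨hdisj' j0 j' hne, hLd j'⟩
    · rw [hA'', Function.update_of_ne hj]
      rcases eq_or_ne j' j0 with rfl | hj'
      · rw [Function.update_self]
        exact (Finset.disjoint_union_left.mpr ⟨hdisj' j0 j hj.symm, hLd j⟩).symm
      · rw [Function.update_of_ne hj']
        exact hdisj' j j' hne
  · apply Finset.Subset.antisymm (Finset.subset_univ _)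
    intro x _
    by_cases hx : x ∈ Finset.univ.biUnion A'
    · obtain ⟨j, _, hxj⟩ := Finset.mem_biUnion.mp hx
      exact Finset.mem_biUnion.mpr ⟨j, Finset.mem_univ j, hsubA j hxj⟩
    · refine Finset.mem_biUnion.mpr ⟨j0, Finset.mem_univ j0, ?_⟩
      rw [hA'', Function.update_self]
      exact Finset.mem_union_right _ (Finset.mem_sdiff.mpr ⟨Finset.mem_univ x, hx⟩)
  · intro i
    by_cases hi : t i = 0
    · have : μ i / n = 0 := hi
      rw [this]; exact zero_le
    · have hiU : i ∈ U := Finset.mem_filter.mpr ⟨Finset.mem_univ i, hi⟩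
      exact le_trans (hval' i hiU) (hmono i _ _ (hsubA i))
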